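/- Let D be a nonempty small category satisfying the right Ore condition (every pair of morphisms with common codomain can be completed to a commutative square) and let J_at be the atomic topology on D, whose covering sieves are exactly the nonempty sieves. Then the following are equivalent: (i) for any two objects a and b of D there exist an object d and morphisms d → a and d → b; (ii) the topos of sheaves Sh(D, J_at) (of set-valued sheaves) is two-valued, i.e., the lattice of subobjects of its terminal object has exactly two elements, the bottom and the top, and these are distinct. -/

import Mathlib

open CategoryTheory CategoryTheory.Limits Opposite

universe u

namespace JEAux

variable {D : Type u} [SmallCategory D]

/-- The constant `PUnit` presheaf. -/
def unitP (D : Type u) [SmallCategory D] : Dᵒᵖ ⥤ Type u where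
  obj _ := PUnit
  map _ := 𝟙 _

/-- The constant empty presheaf. -/
def emptyP (D : Type u) [SmallCategory D] : Dᵒᵖ ⥤ Type u where
  obj _ := PEmpty
  map _ := 𝟙 _

lemma unitP_isSheaf (J : GrothendieckTopology D) : Presheaf.IsSheaf J (unitP D) := by
  rw [isSheaf_iff_isSheaf_of_type]
  intro c S _ x _
  exact ⟨PUnit.unit, fun _ _ _ => rfl, fun _ _ => rfl⟩

lemma emptyP_isSheaf (J : GrothendieckTopology D)
    (hJ : ∀ (a : D) (S : Sieve a), S ∈ J a ↔ ∃ (b : D) (f : b ⟶ a), S f) :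
    Presheaf.IsSheaf J (emptyP D) := by
  rw [isSheaf_iff_isSheaf_of_type]
  intro c S hS x _
  obtain ⟨b, f, hf⟩ := (hJ c S).mp hS
  exact (x f hf).elim

variable {J : GrothendieckTopology D}

lemma hom_sub (F G : Sheaf J (Type u)) (hG : ∀ c, Subsingleton (G.val.obj c)) :
    Subsingleton (F ⟶ G) :=
  ⟨fun f g => Sheaf.hom_ext (NatTrans.ext (funext fun c => ConcreteCategory.hom_ext _ _ fun _ =>
    @Subsingleton.elim _ (hG c) _ _))⟩

lemma exists_hom (F G : Sheaf J (Type u)) (hG : ∀ c, Subsingleton (G.val.obj c))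
    (h : ∀ c, F.val.obj c → Nonempty (G.val.obj c)) : Nonempty (F ⟶ G) :=
  ⟨⟨{ app := fun c => ↾fun s => (h c s).some
      naturality := fun _ c' _ => ConcreteCategory.hom_ext _ _ fun _ => @Subsingleton.elim _ (hG c') _ _ }⟩⟩

lemma mono_of_sub {F G : Sheaf J (Type u)} (f : F ⟶ G) (hF : ∀ c, Subsingleton (F.val.obj c)) :
    Mono f :=
  ⟨fun g h _ => @Subsingleton.elim _ (hom_sub _ _ hF) g h⟩

lemma closure (hJ : ∀ (a : D) (S : Sieve a), S ∈ J a ↔ ∃ (b : D) (f : b ⟶ a), S f)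
    (F : Sheaf J (Type u)) (hF : ∀ c, Subsingleton (F.val.obj c))
    {b c : D} (g : b ⟶ c) (hb : Nonempty (F.val.obj (op b))) :
    Nonempty (F.val.obj (op c)) := by
  obtain ⟨s⟩ := hb
  have hsheaf := (isSheaf_iff_isSheaf_of_type J F.val).mp F.cond
  set S : Sieve c := Sieve.generate (Presieve.singleton g) with hSdef
  have hS : S ∈ J c :=
    (hJ c S).mpr ⟨b, g, ⟨b, 𝟙 b, g, Presieve.singleton.mk, Category.id_comp g⟩⟩
  have hne : ∀ {d : D} (f : d ⟶ c), S f → Nonempty (F.val.obj (op d)) := by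
    intro d f hf
    obtain ⟨Y, h, g', hg', -⟩ := hf
    cases hg'
    exact ⟨F.val.map h.op s⟩
  let x : Presieve.FamilyOfElements F.val (S : Presieve c) := fun d f hf => (hne f hf).some
  have hx : x.Compatible := by
    intro _ _ _ _ _ _ _ _ _ _
    exact @Subsingleton.elim _ (hF _) _ _
  obtain ⟨t, -⟩ := (hsheaf S hS x hx).exists
  exact ⟨t⟩

/-- The presheaf of "objects jointly embeddable with `a`". -/
def jointP (a : D)
    (ore : ∀ {a b c : D} (f : b ⟶ a) (g : c ⟶ a),
      ∃ (d : D) (h : d ⟶ b) (k : d ⟶ c), h ≫ f = k ≫ g) : Dᵒᵖ ⥤ Type u where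
  obj c := ULift (PLift (∃ (d : D) (_ : d ⟶ c.unop) (_ : d ⟶ a), True))
  map := fun {c c'} f => ↾fun x => ⟨⟨by
    obtain ⟨d, h, k, -⟩ := x.down.down
    obtain ⟨e, p, q, -⟩ := ore f.unop h
    exact ⟨e, p, q ≫ k, trivial⟩⟩⟩
  map_id := fun _ => ConcreteCategory.hom_ext _ _ fun _ => Subsingleton.elim _ _
  map_comp := fun _ _ => ConcreteCategory.hom_ext _ _ fun _ => Subsingleton.elim _ _

lemma jointP_sub (a : D) (ore : ∀ {a b c : D} (f : b ⟶ a) (g : c ⟶ a),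
      ∃ (d : D) (h : d ⟶ b) (k : d ⟶ c), h ≫ f = k ≫ g) (c : Dᵒᵖ) :
    Subsingleton ((jointP a ore).obj c) :=
  inferInstanceAs (Subsingleton (ULift (PLift _)))

lemma jointP_isSheaf (J : GrothendieckTopology D)
    (hJ : ∀ (a : D) (S : Sieve a), S ∈ J a ↔ ∃ (b : D) (f : b ⟶ a), S f)
    (a : D) (ore : ∀ {a b c : D} (f : b ⟶ a) (g : c ⟶ a),
      ∃ (d : D) (h : d ⟶ b) (k : d ⟶ c), h ≫ f = k ≫ g) :
    Presheaf.IsSheaf J (jointP a ore) := by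
  rw [isSheaf_iff_isSheaf_of_type]
  intro c S hS x _
  obtain ⟨b, f, hf⟩ := (hJ c S).mp hS
  obtain ⟨d, h, k, -⟩ := (x f hf).down.down
  refine ⟨⟨⟨⟨d, h ≫ f, k, trivial⟩⟩⟩, fun _ _ _ => @Subsingleton.elim _ (jointP_sub a ore _) _ _,
    fun _ _ => @Subsingleton.elim _ (jointP_sub a ore _) _ _⟩

end JEAux

/-- **Joint embedding corresponds to two-valuedness of the atomic topos.**
Let `D` be a nonempty small category satisfying the right Ore condition and let
`J` be the atomic topology on `D` (the covering sieves are exactly the nonempty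
sieves). Then `D` satisfies the joint embedding property (any two objects admit a
common "source" object mapping to both) if and only if the topos of set-valued
sheaves `Sh(D, J)` is two-valued, i.e. the poset of subobjects of its terminal
object has exactly two elements, a bottom and a top element, which are distinct. -/
theorem joint_embedding_iff_atomic_sheaf_topos_two_valued
    (D : Type u) [SmallCategory D] [Nonempty D]
    (ore : ∀ {a b c : D} (f : b ⟶ a) (g : c ⟶ a),
      ∃ (d : D) (h : d ⟶ b) (k : d ⟶ c), h ≫ f = k ≫ g)
    (J : GrothendieckTopology D)
    (hJ : ∀ (a : D) (S : Sieve a), S ∈ J a ↔ ∃ (b : D) (f : b ⟶ a), S f) :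
    (∀ a b : D, ∃ (d : D) (_ : d ⟶ a) (_ : d ⟶ b), True) ↔
      ∃ x y : Subobject (⊤_ (Sheaf J (Type u))),
        IsBot x ∧ IsTop y ∧ x ≠ y ∧ ∀ z : Subobject (⊤_ (Sheaf J (Type u))), z = x ∨ z = y := by
  classical
  obtain ⟨d0⟩ := (inferInstance : Nonempty D)
  set T : Sheaf J (Type u) := ⟨JEAux.unitP D, JEAux.unitP_isSheaf J⟩ with hTdef
  have hT_sub : ∀ c, Subsingleton (T.val.obj c) := fun _ => inferInstanceAs (Subsingleton PUnit)
  have hTterm : IsTerminal T :=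
    IsTerminal.ofUniqueHom (fun F => ⟨{ app := fun _ => ↾fun _ => PUnit.unit }⟩)
      (fun F m => @Subsingleton.elim _ (JEAux.hom_sub _ _ hT_sub) _ _)
  set iso : T ≅ ⊤_ (Sheaf J (Type u)) := hTterm.uniqueUpToIso terminalIsTerminal with hisodef
  have hkey : ∀ (c : Dᵒᵖ) (s : (⊤_ (Sheaf J (Type u))).val.obj c),
      iso.hom.hom.app c (iso.inv.hom.app c s) = s := by
    intro c s
    have h1 : iso.inv ≫ iso.hom = 𝟙 _ := iso.inv_hom_id
    have h2 : (iso.inv ≫ iso.hom).hom.app c s = s := by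
      rw [h1]; rfl
    exact h2
  have hTop_sub : ∀ c, Subsingleton ((⊤_ (Sheaf J (Type u))).val.obj c) := by
    intro c
    refine ⟨fun s t => ?_⟩
    rw [← hkey c s, ← hkey c t]
    exact congrArg _ (@Subsingleton.elim _ (hT_sub c) _ _)
  have hTop_ne : ∀ c, Nonempty ((⊤_ (Sheaf J (Type u))).val.obj c) :=
    fun c => ⟨iso.hom.hom.app c PUnit.unit⟩
  set E : Sheaf J (Type u) := ⟨JEAux.emptyP D, JEAux.emptyP_isSheaf J hJ⟩ with hEdef
  have hE_sub : ∀ c, Subsingleton (E.val.obj c) := fun _ => inferInstanceAs (Subsingleton PEmpty)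
  obtain ⟨eE⟩ := JEAux.exists_hom E (⊤_ (Sheaf J (Type u))) hTop_sub
    (fun c s => (s : PEmpty).elim)
  haveI : Mono eE := JEAux.mono_of_sub eE hE_sub
  have hsub : ∀ (G : Sheaf J (Type u)) (g : G ⟶ ⊤_ (Sheaf J (Type u))), Mono g →
      ∀ c, Subsingleton (G.val.obj c) := by
    intro G g hg c
    haveI := hg
    haveI : Mono g.hom := inferInstance
    have hm : Mono (g.hom.app c) := (NatTrans.mono_iff_mono_app g.hom).mp inferInstance c
    have hinj := (mono_iff_injective _).mp hm
    exact ⟨fun s t => hinj (@Subsingleton.elim _ (hTop_sub c) _ _)⟩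
  constructor
  · intro hje
    refine ⟨Subobject.mk eE, ⊤, ?_, fun _ => le_top, ?_, ?_⟩
    · intro z
      refine Subobject.ind (fun w => Subobject.mk eE ≤ w) ?_ z
      intro G g hg
      haveI := hg
      obtain ⟨φ⟩ := JEAux.exists_hom E G (hsub G g hg) (fun c s => (s : PEmpty).elim)
      exact Subobject.mk_le_mk_of_comm φ (@Subsingleton.elim _ (JEAux.hom_sub _ _ hTop_sub) _ _)
    · intro h
      haveI : IsIso eE := (Subobject.isIso_iff_mk_eq_top eE).mpr h
      exact ((inv eE).hom.app (op d0) (hTop_ne (op d0)).some : PEmpty).elim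
    · intro z
      refine Subobject.ind (fun w => w = Subobject.mk eE ∨ w = ⊤) ?_ z
      intro G g hg
      haveI := hg
      have hGsub := hsub G g hg
      by_cases h0 : ∃ c : D, Nonempty (G.val.obj (op c))
      · right
        obtain ⟨c0, hc0⟩ := h0
        have hall : ∀ c : Dᵒᵖ, Nonempty (G.val.obj c) := by
          intro c
          obtain ⟨d, k, l, -⟩ := hje c.unop c0
          have hd : Nonempty (G.val.obj (op d)) := ⟨G.val.map l.op hc0.some⟩
          exact JEAux.closure hJ G hGsub k hd
        have hiso : ∀ c, IsIso (g.hom.app c) := by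
          intro c
          refine (isIso_iff_bijective _).mpr ⟨(mono_iff_injective _).mp
            ((NatTrans.mono_iff_mono_app g.hom).mp inferInstance c), fun t => ?_⟩
          exact ⟨(hall c).some, @Subsingleton.elim _ (hTop_sub c) _ _⟩
        haveI : IsIso g.hom := NatIso.isIso_of_isIso_app g.hom
        haveI : IsIso g := by
          haveI : IsIso ((sheafToPresheaf J (Type u)).map g) := ‹IsIso g.hom›
          exact isIso_of_reflects_iso g (sheafToPresheaf J (Type u))
        exact Subobject.mk_eq_top_of_isIso g
      · left
        obtain ⟨φ⟩ := JEAux.exists_hom G E hE_sub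
          (fun c s => absurd ⟨c.unop, ⟨s⟩⟩ h0)
        refine le_antisymm (Subobject.mk_le_mk_of_comm φ
          (@Subsingleton.elim _ (JEAux.hom_sub _ _ hTop_sub) _ _)) ?_
        obtain ⟨ψ⟩ := JEAux.exists_hom E G hGsub (fun c s => (s : PEmpty).elim)
        exact Subobject.mk_le_mk_of_comm ψ (@Subsingleton.elim _ (JEAux.hom_sub _ _ hTop_sub) _ _)
  · rintro ⟨x, y, hx, hy, -, hall⟩ a b
    by_contra hnab
    set F : Sheaf J (Type u) :=
      ⟨JEAux.jointP a (fun {a b c} f g => ore f g),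
        JEAux.jointP_isSheaf J hJ a (fun {a b c} f g => ore f g)⟩ with hFdef
    have hFsub : ∀ c, Subsingleton (F.val.obj c) :=
      JEAux.jointP_sub a (fun {a b c} f g => ore f g)
    obtain ⟨φ⟩ := JEAux.exists_hom F (⊤_ (Sheaf J (Type u))) hTop_sub (fun c _ => hTop_ne c)
    haveI : Mono φ := JEAux.mono_of_sub φ hFsub
    rcases hall (Subobject.mk φ) with h | h
    · have h1 := hx (Subobject.mk eE)
      rw [← h] at h1
      have sa : F.val.obj (op a) := ⟨⟨⟨a, 𝟙 a, 𝟙 a, trivial⟩⟩⟩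
      exact ((Subobject.ofMkLEMk φ eE h1).hom.app (op a) sa : PEmpty).elim
    · have h2 := hy (Subobject.mk (𝟙 (⊤_ (Sheaf J (Type u)))))
      rw [← h] at h2
      have hb := (Subobject.ofMkLEMk (𝟙 (⊤_ (Sheaf J (Type u)))) φ h2).hom.app (op b)
        (hTop_ne (op b)).some
      obtain ⟨d, hdb, hda, -⟩ := hb.down.down
      exact hnab ⟨d, hda, hdb, trivial⟩
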